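/- ETKF covariance identity: let Ĉ = X̂ X̂ᵀ with X̂ ∈ ℝ^{n×K}, Γ ∈ ℝ^{m×m} symmetric positive definite, H ∈ ℝ^{m×n}, T = (I_K + (H X̂)ᵀ Γ⁻¹ (H X̂))⁻¹, S = H Ĉ Hᵀ + Γ, K_g = Ĉ Hᵀ S⁻¹, and X = X̂ T^{1/2} where T^{1/2} is the positive definite square root of T. Then X Xᵀ = (I_n − K_g H) Ĉ. -/

import Mathlib

open Matrix

namespace Matrix.PosSemidef

open scoped ComplexOrder

/-- The positive semidefinite square root, as defined in the older Mathlib (removed since). -/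
noncomputable def sqrt {n 𝕜 : Type*} [Fintype n] [RCLike 𝕜] [DecidableEq n] {A : Matrix n n 𝕜}
    (hA : A.PosSemidef) : Matrix n n 𝕜 :=
  (hA.1.eigenvectorUnitary : Matrix n n 𝕜) *
    diagonal ((↑) ∘ (fun x : ℝ => Real.sqrt x) ∘ hA.1.eigenvalues) *
    (star hA.1.eigenvectorUnitary : Matrix n n 𝕜)

end Matrix.PosSemidef

/-- ETKF covariance identity: with `X = X̂ T^{1/2}`, one has `X Xᵀ = (I − K_g H) Ĉ`. -/
theorem stmt9 {n m K : ℕ} (Γ : Matrix (Fin m) (Fin m) ℝ) (hΓ : Γ.PosDef)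
    (H : Matrix (Fin m) (Fin n) ℝ) (Xh : Matrix (Fin n) (Fin K) ℝ)
    (Ch : Matrix (Fin n) (Fin n) ℝ) (hCh : Ch = Xh * Xhᵀ)
    (T : Matrix (Fin K) (Fin K) ℝ) (hT : T = (1 + (H * Xh)ᵀ * Γ⁻¹ * (H * Xh))⁻¹)
    (hTpsd : T.PosSemidef)
    (S : Matrix (Fin m) (Fin m) ℝ) (hS : S = H * Ch * Hᵀ + Γ)
    (Kg : Matrix (Fin n) (Fin m) ℝ) (hKg : Kg = Ch * Hᵀ * S⁻¹)
    (X : Matrix (Fin n) (Fin K) ℝ) (hX : X = Xh * hTpsd.sqrt) :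
    X * Xᵀ = (1 - Kg * H) * Ch := by
  set B := H * Xh with hB
  -- S is positive definite, hence invertible
  have hBBt : (B * Bᵀ).PosSemidef := by
    have := Matrix.posSemidef_self_mul_conjTranspose B
    simpa using this
  have hSpd : S.PosDef := by
    rw [hS, hCh]
    have h1 : H * (Xh * Xhᵀ) * Hᵀ = B * Bᵀ := by
      simp [hB, Matrix.transpose_mul, Matrix.mul_assoc]
    rw [h1]
    exact Matrix.PosDef.posSemidef_add hBBt hΓ
  have hSinv : S * S⁻¹ = 1 := Matrix.mul_nonsing_inv _ (isUnit_iff_ne_zero.mpr hSpd.det_pos.ne')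
  have hΓinv : Γ⁻¹ * Γ = 1 := Matrix.nonsing_inv_mul _ (isUnit_iff_ne_zero.mpr hΓ.det_pos.ne')
  -- A = 1 + Bᵀ Γ⁻¹ B is positive definite, and its inverse is 1 - Bᵀ S⁻¹ B (Woodbury)
  have hpsd : (Bᵀ * Γ⁻¹ * B).PosSemidef := by
    have := hΓ.inv.posSemidef.conjTranspose_mul_mul_same B
    simpa using this
  have hApd : (1 + Bᵀ * Γ⁻¹ * B).PosDef := Matrix.PosDef.add_posSemidef Matrix.PosDef.one hpsd
  have hS' : B * Bᵀ + Γ = S := by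
    rw [hS, hCh]
    simp [hB, Matrix.transpose_mul, Matrix.mul_assoc]
  have key : Bᵀ * Γ⁻¹ * (B * Bᵀ + Γ) * (S⁻¹ * B) = Bᵀ * Γ⁻¹ * B := by
    rw [hS', Matrix.mul_assoc (Bᵀ * Γ⁻¹) S, ← Matrix.mul_assoc S, hSinv, Matrix.one_mul,
      Matrix.mul_assoc]
  have expand : Bᵀ * Γ⁻¹ * (B * Bᵀ + Γ) * (S⁻¹ * B)
      = Bᵀ * Γ⁻¹ * B * (Bᵀ * S⁻¹ * B) + Bᵀ * S⁻¹ * B := by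
    rw [Matrix.mul_add, Matrix.add_mul]
    congr 1
    · simp [Matrix.mul_assoc]
    · rw [Matrix.mul_assoc Bᵀ Γ⁻¹ Γ, hΓinv, Matrix.mul_one, Matrix.mul_assoc]
  have hPQ : Bᵀ * Γ⁻¹ * B * (Bᵀ * S⁻¹ * B) = Bᵀ * Γ⁻¹ * B - Bᵀ * S⁻¹ * B :=
    eq_sub_of_add_eq (expand ▸ key)
  have hwood : (1 + Bᵀ * Γ⁻¹ * B) * (1 - Bᵀ * S⁻¹ * B) = 1 := by
    simp only [Matrix.add_mul, Matrix.mul_sub, Matrix.one_mul, Matrix.mul_one, hPQ]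
    abel
  have hTeq : T = 1 - Bᵀ * S⁻¹ * B := by
    rw [hT, Matrix.inv_eq_right_inv hwood]
  -- sqrt properties
  have hsq : hTpsd.sqrt * hTpsd.sqrt = T := by
    have hU : (star hTpsd.1.eigenvectorUnitary : Matrix (Fin K) (Fin K) ℝ) * (hTpsd.1.eigenvectorUnitary : Matrix (Fin K) (Fin K) ℝ) = 1 := Unitary.coe_star_mul_self _
    rw [Matrix.PosSemidef.sqrt]
    conv_rhs => rw [hTpsd.1.spectral_theorem, Unitary.conjStarAlgAut_apply]
    simp only [Matrix.mul_assoc]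
    rw [← Matrix.mul_assoc (star _ : Matrix (Fin K) (Fin K) ℝ) _, hU, Matrix.one_mul,
      ← Matrix.mul_assoc (diagonal _) (diagonal _), diagonal_mul_diagonal]
    congr 3
    funext i
    simp [Real.mul_self_sqrt (hTpsd.eigenvalues_nonneg i)]
  have hsymm : (hTpsd.sqrt)ᵀ = hTpsd.sqrt := by
    rw [Matrix.PosSemidef.sqrt]
    simp [Matrix.transpose_mul, Matrix.star_eq_conjTranspose, Matrix.mul_assoc]
  have lhs : X * Xᵀ = Xh * T * Xhᵀ := by
    rw [hX, Matrix.transpose_mul, hsymm, Matrix.mul_assoc, ← Matrix.mul_assoc hTpsd.sqrt,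
      hsq, ← Matrix.mul_assoc, Matrix.mul_assoc]
  rw [lhs, hTeq, hKg, hCh, hB]
  simp only [Matrix.transpose_mul, Matrix.mul_sub, Matrix.sub_mul, Matrix.mul_one,
    Matrix.one_mul, Matrix.mul_assoc]
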